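/- Let J be a d×d real positive definite matrix. The map sending a positive definite matrix H with appropriate normalization to √J · R/(Tr R) · √J, where R = √(√(J^{-1}) H √(J^{-1})), is injective on the set of d×d real positive definite matrices H with Tr H = 1. -/

import Mathlib

open Matrix

open scoped Classical in
noncomputable def msqrt {d : ℕ} (A : Matrix (Fin d) (Fin d) ℝ) : Matrix (Fin d) (Fin d) ℝ :=
  if h : A.PosSemidef then
    (h.1.eigenvectorUnitary : Matrix (Fin d) (Fin d) ℝ) *
      diagonal (Real.sqrt ∘ h.1.eigenvalues) *
      (star h.1.eigenvectorUnitary : Matrix (Fin d) (Fin d) ℝ)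
  else 0

noncomputable def psqrt {d : ℕ} {A : Matrix (Fin d) (Fin d) ℝ} (h : A.PosSemidef) :
    Matrix (Fin d) (Fin d) ℝ :=
  (h.1.eigenvectorUnitary : Matrix (Fin d) (Fin d) ℝ) *
    diagonal (Real.sqrt ∘ h.1.eigenvalues) *
    (star h.1.eigenvectorUnitary : Matrix (Fin d) (Fin d) ℝ)

lemma psqrt_posSemidef {d : ℕ} {A : Matrix (Fin d) (Fin d) ℝ} (h : A.PosSemidef) :
    (psqrt h).PosSemidef := by
  rw [psqrt, Matrix.star_eq_conjTranspose]
  exact (posSemidef_diagonal_iff.2 (fun i => Real.sqrt_nonneg _)).mul_mul_conjTranspose_same _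

lemma psqrt_mul_self {d : ℕ} {A : Matrix (Fin d) (Fin d) ℝ} (h : A.PosSemidef) :
    psqrt h * psqrt h = A := by
  have hs := h.1.spectral_theorem
  simp only [Unitary.conjStarAlgAut_apply] at hs
  have hD : diagonal (Real.sqrt ∘ h.1.eigenvalues) * diagonal (Real.sqrt ∘ h.1.eigenvalues)
      = diagonal (RCLike.ofReal ∘ h.1.eigenvalues) := by
    rw [diagonal_mul_diagonal]; congr 1; funext i
    simp [Real.mul_self_sqrt (h.eigenvalues_nonneg i)]
  have hUU : ∀ X : Matrix (Fin d) (Fin d) ℝ, star (h.1.eigenvectorUnitary : Matrix (Fin d) (Fin d) ℝ)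
      * ((h.1.eigenvectorUnitary : Matrix (Fin d) (Fin d) ℝ) * X) = X := by
    intro X; rw [← Matrix.mul_assoc, Unitary.coe_star_mul_self, Matrix.one_mul]
  unfold psqrt
  conv_rhs => rw [hs]
  simp only [Unitary.coe_star, Matrix.mul_assoc, hUU]
  rw [← Matrix.mul_assoc (diagonal _) (diagonal _), hD]

lemma psqrt_sq {d : ℕ} {A : Matrix (Fin d) (Fin d) ℝ} (h : A.PosSemidef) :
    psqrt h ^ 2 = A := by
  rw [sq]; exact psqrt_mul_self h

lemma msqrt_eq {d : ℕ} {A : Matrix (Fin d) (Fin d) ℝ} (h : A.PosSemidef) :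
    msqrt A = psqrt h := by
  rw [msqrt, dif_pos h]; rfl

lemma posDef_of_posSemidef_det_ne_zero {d : ℕ} {A : Matrix (Fin d) (Fin d) ℝ}
    (hA : A.PosSemidef) (hdet : A.det ≠ 0) : A.PosDef := by
  exact hA.posDef_iff_det_ne_zero.2 hdet

lemma posDef_sqrt {d : ℕ} {A : Matrix (Fin d) (Fin d) ℝ} (hA : A.PosDef) :
    (psqrt hA.posSemidef).PosDef := by
  refine posDef_of_posSemidef_det_ne_zero (psqrt_posSemidef hA.posSemidef) ?_
  have h2 : psqrt hA.posSemidef ^ 2 = A := psqrt_sq hA.posSemidef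
  have : (psqrt hA.posSemidef).det ^ 2 = A.det := by
    rw [← Matrix.det_pow, h2]
  intro h
  rw [h] at this
  simp at this
  exact hA.det_pos.ne' this.symm

lemma trace_pos_of_posDef {d : ℕ} (hd : 0 < d) {A : Matrix (Fin d) (Fin d) ℝ}
    (hA : A.PosDef) : 0 < A.trace := by
  have hdiag : ∀ i, 0 < A i i := by
    intro i
    have := hA.dotProduct_mulVec_pos (x := Pi.single i 1) (by simp)
    simpa [dotProduct, mulVec, Pi.single_apply, Finset.sum_ite_eq', Finset.mul_sum] using this
  rw [Matrix.trace]
  have : Nonempty (Fin d) := ⟨⟨0, hd⟩⟩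
  exact Finset.sum_pos (fun i _ => hdiag i) Finset.univ_nonempty

/-- For `J` a `d×d` real positive definite matrix, the map
`H ↦ √J (R / Tr R) √J`, where `R = √(√(J⁻¹) H √(J⁻¹))`, is injective on the set of
`d×d` real positive definite matrices `H` with `Tr H = 1`. -/
theorem stmt7 {d : ℕ} (J : Matrix (Fin d) (Fin d) ℝ) (hJ : J.PosDef)
    (H₁ H₂ : Matrix (Fin d) (Fin d) ℝ) (hH₁ : H₁.PosDef) (hH₂ : H₂.PosDef)
    (htr₁ : H₁.trace = 1) (htr₂ : H₂.trace = 1)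
    (heq : ((msqrt (msqrt J⁻¹ * H₁ * msqrt J⁻¹)).trace)⁻¹ •
        (msqrt J * msqrt (msqrt J⁻¹ * H₁ * msqrt J⁻¹) * msqrt J) =
      ((msqrt (msqrt J⁻¹ * H₂ * msqrt J⁻¹)).trace)⁻¹ •
        (msqrt J * msqrt (msqrt J⁻¹ * H₂ * msqrt J⁻¹) * msqrt J)) :
    H₁ = H₂ := by
  rcases Nat.eq_zero_or_pos d with hd | hd
  · subst hd; exact Subsingleton.elim _ _
  -- setup
  have hJinv : (J⁻¹).PosDef := hJ.inv
  set K := msqrt J⁻¹ with hKdef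
  have hKsq : K = psqrt hJinv.posSemidef := msqrt_eq hJinv.posSemidef
  have hK : K.PosDef := hKsq ▸ posDef_sqrt hJinv
  set Q := msqrt J with hQdef
  have hQsq : Q = psqrt hJ.posSemidef := msqrt_eq hJ.posSemidef
  have hQ : Q.PosDef := hQsq ▸ posDef_sqrt hJ
  have hKH : ∀ (H : Matrix (Fin d) (Fin d) ℝ), H.PosDef → (K * H * K).PosDef := by
    intro H hH
    refine posDef_of_posSemidef_det_ne_zero ?_ ?_
    · have := hH.posSemidef.conjTranspose_mul_mul_same K
      simpa only [hK.isHermitian.eq] using this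
    · simp only [Matrix.det_mul]
      exact mul_ne_zero (mul_ne_zero hK.det_pos.ne' hH.det_pos.ne') hK.det_pos.ne'
  have hM₁ : (K * H₁ * K).PosDef := hKH H₁ hH₁
  have hM₂ : (K * H₂ * K).PosDef := hKH H₂ hH₂
  set S₁ := msqrt (K * H₁ * K) with hS₁def
  set S₂ := msqrt (K * H₂ * K) with hS₂def
  have hS₁eq : S₁ = psqrt hM₁.posSemidef := msqrt_eq hM₁.posSemidef
  have hS₂eq : S₂ = psqrt hM₂.posSemidef := msqrt_eq hM₂.posSemidef
  have hS₁ : S₁.PosDef := hS₁eq ▸ posDef_sqrt hM₁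
  have hS₂ : S₂.PosDef := hS₂eq ▸ posDef_sqrt hM₂
  have hS₁sq : S₁ * S₁ = K * H₁ * K := by rw [hS₁eq]; exact psqrt_mul_self hM₁.posSemidef
  have hS₂sq : S₂ * S₂ = K * H₂ * K := by rw [hS₂eq]; exact psqrt_mul_self hM₂.posSemidef
  have ht₁ : 0 < S₁.trace := trace_pos_of_posDef hd hS₁
  have ht₂ : 0 < S₂.trace := trace_pos_of_posDef hd hS₂
  -- cancel Q
  have hQdet : IsUnit Q.det := hQ.det_pos.ne'.isUnit
  have key : (S₁.trace)⁻¹ • S₁ = (S₂.trace)⁻¹ • S₂ := by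
    have := congrArg (fun X => Q⁻¹ * X * Q⁻¹) heq
    simp only [Matrix.mul_smul, Matrix.smul_mul] at this
    rw [show Q⁻¹ * (Q * S₁ * Q) * Q⁻¹ = (Q⁻¹ * Q) * S₁ * (Q * Q⁻¹) by
          simp only [Matrix.mul_assoc],
        show Q⁻¹ * (Q * S₂ * Q) * Q⁻¹ = (Q⁻¹ * Q) * S₂ * (Q * Q⁻¹) by
          simp only [Matrix.mul_assoc],
        Matrix.nonsing_inv_mul Q hQdet, Matrix.mul_nonsing_inv Q hQdet] at this
    simp only [Matrix.one_mul, Matrix.mul_one] at this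
    exact this
  -- S₁ = a • S₂
  set a : ℝ := S₁.trace * (S₂.trace)⁻¹ with hadef
  have ha : 0 < a := mul_pos ht₁ (inv_pos.mpr ht₂)
  have hS : S₁ = a • S₂ := by
    have := congrArg (fun X => S₁.trace • X) key
    simp only [smul_smul] at this
    rw [mul_inv_cancel₀ ht₁.ne', one_smul] at this
    rw [this, hadef]
  -- square it
  have hsq : K * H₁ * K = K * ((a ^ 2) • H₂) * K := by
    rw [← hS₁sq, hS, Matrix.smul_mul, Matrix.mul_smul, smul_smul, ← sq, hS₂sq]
    rw [Matrix.mul_smul, Matrix.smul_mul]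
  -- cancel K
  have hKdet : IsUnit K.det := hK.det_pos.ne'.isUnit
  have hH : H₁ = (a ^ 2) • H₂ := by
    have := congrArg (fun X => K⁻¹ * X * K⁻¹) hsq
    rw [show K⁻¹ * (K * H₁ * K) * K⁻¹ = (K⁻¹ * K) * H₁ * (K * K⁻¹) by
          simp only [Matrix.mul_assoc],
        show K⁻¹ * (K * ((a^2) • H₂) * K) * K⁻¹ = (K⁻¹ * K) * ((a^2) • H₂) * (K * K⁻¹) by
          simp only [Matrix.mul_assoc],
        Matrix.nonsing_inv_mul K hKdet, Matrix.mul_nonsing_inv K hKdet] at this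
    simp only [Matrix.one_mul, Matrix.mul_one] at this
    exact this
  -- traces
  have htr : (1 : ℝ) = a ^ 2 := by
    have := congrArg Matrix.trace hH
    rw [htr₁, Matrix.trace_smul, htr₂] at this
    simpa using this
  have ha1 : a = 1 := by
    have := htr.symm
    nlinarith
  rw [hH, ha1]; simp
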